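/- (Sufficiency in the model with additive fixed effects and common thresholds.) Fix β ∈ ℝ^k, covariate vectors x₁₁, x₁₂, x₂₁, x₂₂ ∈ ℝ^k, sender effects α₁, α₂ ∈ ℝ, receiver effects γ₁, γ₂ ∈ ℝ, a function λ : {1,…,M} → ℝ of common thresholds, and cutoffs m₁₁, m₁₂, m₂₁, m₂₂ ∈ {1,…,M}. Let D₁₁, D₁₂, D₂₁, D₂₂ be mutually independent random variables valued in {0,1} with P(D_{rs} = 1) = Λ(⟨x_{rs}, β⟩ + α_r + γ_s − λ(m_{rs})) for r,s ∈ {1,2}. Set Z = ((D₁₁ − D₁₂) − (D₂₁ − D₂₂))/2, r = (x₁₁ − x₁₂) − (x₂₁ − x₂₂), and λ₀(m) = (λ(m₁₁) − λ(m₁₂)) − (λ(m₂₁) − λ(m₂₂)). Then P(Z = 1 | Z ∈ {−1, +1}) = Λ(⟨r, β⟩ − λ₀(m)); in particular this conditional probability does not depend on α₁, α₂, γ₁, γ₂. -/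

import Mathlib

open MeasureTheory ProbabilityTheory
open scoped RealInnerProductSpace

/-- The standard logistic CDF `Λ(z) = e^z / (1 + e^z)`. -/
noncomputable def logistic (z : ℝ) : ℝ := Real.exp z / (1 + Real.exp z)

lemma one_add_exp_pos (z : ℝ) : 0 < 1 + Real.exp z := by positivity

lemma logistic_pos (z : ℝ) : 0 < logistic z := by
  unfold logistic; positivity

lemma logistic_lt_one (z : ℝ) : logistic z < 1 := by
  unfold logistic
  rw [div_lt_one (one_add_exp_pos z)]
  linarith

lemma logistic_nonneg (z : ℝ) : 0 ≤ logistic z := (logistic_pos z).le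

lemma one_sub_logistic (z : ℝ) : 1 - logistic z = 1 / (1 + Real.exp z) := by
  unfold logistic
  field_simp
  ring

lemma key_ratio (a b c d : ℝ) :
    logistic a * (1 - logistic b) * ((1 - logistic c) * logistic d) /
      (logistic a * (1 - logistic b) * ((1 - logistic c) * logistic d) +
        (1 - logistic a) * logistic b * (logistic c * (1 - logistic d)))
      = logistic (a - b - c + d) := by
  have ha := Real.exp_pos a
  have hb := Real.exp_pos b
  have hc := Real.exp_pos c
  have hd := Real.exp_pos d
  have h1a := one_add_exp_pos a
  have h1b := one_add_exp_pos b
  have h1c := one_add_exp_pos c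
  have h1d := one_add_exp_pos d
  have hexp : Real.exp (a - b - c + d) = Real.exp a * Real.exp d / (Real.exp b * Real.exp c) := by
    rw [show a - b - c + d = a + d - (b + c) by ring, Real.exp_sub, Real.exp_add, Real.exp_add]
  rw [one_sub_logistic, one_sub_logistic, one_sub_logistic]
  unfold logistic
  rw [hexp]
  have hbc : (0:ℝ) < Real.exp b * Real.exp c := by positivity
  have hden : (0:ℝ) < Real.exp a * Real.exp d / (Real.exp b * Real.exp c) + 1 := by positivity
  field_simp
  ring
  rw [← add_mul, mul_inv_cancel₀ (by positivity)]

/-- Sufficiency in the ordered-logit network model with additive fixed effects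
`α` (sender), `γ` (receiver) and common thresholds `lam`, with a vector of four
potentially different cutoffs `m`. -/
theorem sufficiency_additive_effects_common_thresholds
    {Ω : Type*} [MeasurableSpace Ω] (P : Measure Ω) [IsProbabilityMeasure P]
    (k M : ℕ) (hM : 1 ≤ M)
    (β : EuclideanSpace ℝ (Fin k))
    (x : Fin 2 → Fin 2 → EuclideanSpace ℝ (Fin k))
    (α : Fin 2 → ℝ) (γ : Fin 2 → ℝ)
    (lam : Fin M → ℝ) (m : Fin 2 → Fin 2 → Fin M)
    (D : Fin 2 → Fin 2 → Ω → ℝ)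
    (hmeas : ∀ r s, Measurable (D r s))
    (hval : ∀ r s ω, D r s ω = 0 ∨ D r s ω = 1)
    (hindep : iIndepFun
      (fun p : Fin 2 × Fin 2 => D p.1 p.2) P)
    (hprob : ∀ r s, P {ω | D r s ω = 1}
      = ENNReal.ofReal (logistic (⟪x r s, β⟫ + α r + γ s - lam (m r s))))
    (Z : Ω → ℝ)
    (hZ : ∀ ω, Z ω = ((D 0 0 ω - D 0 1 ω) - (D 1 0 ω - D 1 1 ω)) / 2)
    (r : EuclideanSpace ℝ (Fin k))
    (hr : r = (x 0 0 - x 0 1) - (x 1 0 - x 1 1))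
    (lam₀ : ℝ)
    (hlam₀ : lam₀ = (lam (m 0 0) - lam (m 0 1)) - (lam (m 1 0) - lam (m 1 1))) :
    P[|{ω | Z ω = 1 ∨ Z ω = -1}] {ω | Z ω = 1}
      = ENNReal.ofReal (logistic (⟪r, β⟫ - lam₀)) := by
  classical
  -- index-wise parameters
  set t : Fin 2 → Fin 2 → ℝ := fun i j => ⟪x i j, β⟫ + α i + γ j - lam (m i j) with ht
  set p : Fin 2 → Fin 2 → ℝ := fun i j => logistic (t i j) with hp
  -- probability of D = 1 and D = 0
  have hP1 : ∀ i j, P (D i j ⁻¹' {1}) = ENNReal.ofReal (p i j) := by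
    intro i j
    have : D i j ⁻¹' {1} = {ω | D i j ω = 1} := rfl
    rw [this, hprob]
  have hcompl : ∀ i j, D i j ⁻¹' {0} = (D i j ⁻¹' {1})ᶜ := by
    intro i j
    ext ω
    rcases hval i j ω with h | h <;> simp [h]
  have hP0 : ∀ i j, P (D i j ⁻¹' {0}) = ENNReal.ofReal (1 - p i j) := by
    intro i j
    rw [hcompl, measure_compl ((hmeas i j) (measurableSet_singleton 1)) (measure_ne_top _ _),
      hP1, measure_univ, ENNReal.ofReal_sub _ (logistic_nonneg _), ENNReal.ofReal_one]
  -- the two events as intersections of preimages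
  set v1 : Fin 2 × Fin 2 → ℝ := fun q => if q.1 = q.2 then 1 else 0 with hv1
  set v2 : Fin 2 × Fin 2 → ℝ := fun q => if q.1 = q.2 then 0 else 1 with hv2
  have hsplit : ∀ ω, Z ω = 1 ↔
      (D 0 0 ω = 1 ∧ D 0 1 ω = 0 ∧ D 1 0 ω = 0 ∧ D 1 1 ω = 1) := by
    intro ω
    rw [hZ ω]
    rcases hval 0 0 ω with h00 | h00 <;> rcases hval 0 1 ω with h01 | h01 <;>
      rcases hval 1 0 ω with h10 | h10 <;> rcases hval 1 1 ω with h11 | h11 <;>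
      rw [h00, h01, h10, h11] <;> norm_num
  have hsplit' : ∀ ω, Z ω = -1 ↔
      (D 0 0 ω = 0 ∧ D 0 1 ω = 1 ∧ D 1 0 ω = 1 ∧ D 1 1 ω = 0) := by
    intro ω
    rw [hZ ω]
    rcases hval 0 0 ω with h00 | h00 <;> rcases hval 0 1 ω with h01 | h01 <;>
      rcases hval 1 0 ω with h10 | h10 <;> rcases hval 1 1 ω with h11 | h11 <;>
      rw [h00, h01, h10, h11] <;> norm_num
  have hA : {ω | Z ω = 1} = ⋂ q : Fin 2 × Fin 2, D q.1 q.2 ⁻¹' {v1 q} := by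
    ext ω
    simp only [Set.mem_setOf_eq, Set.mem_iInter, Set.mem_preimage, Set.mem_singleton_iff,
      hsplit ω]
    constructor
    · rintro ⟨h00, h01, h10, h11⟩ q
      fin_cases q <;> simpa [hv1]
    · intro h
      refine ⟨?_, ?_, ?_, ?_⟩
      · simpa [hv1] using h (0, 0)
      · simpa [hv1] using h (0, 1)
      · simpa [hv1] using h (1, 0)
      · simpa [hv1] using h (1, 1)
  have hB : {ω | Z ω = -1} = ⋂ q : Fin 2 × Fin 2, D q.1 q.2 ⁻¹' {v2 q} := by
    ext ω
    simp only [Set.mem_setOf_eq, Set.mem_iInter, Set.mem_preimage, Set.mem_singleton_iff,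
      hsplit' ω]
    constructor
    · rintro ⟨h00, h01, h10, h11⟩ q
      fin_cases q <;> simpa [hv2]
    · intro h
      refine ⟨?_, ?_, ?_, ?_⟩
      · simpa [hv2] using h (0, 0)
      · simpa [hv2] using h (0, 1)
      · simpa [hv2] using h (1, 0)
      · simpa [hv2] using h (1, 1)
  -- abbreviations for the two real probabilities
  set A : ℝ := p 0 0 * (1 - p 0 1) * ((1 - p 1 0) * p 1 1) with hAdef
  set B : ℝ := (1 - p 0 0) * p 0 1 * (p 1 0 * (1 - p 1 1)) with hBdef
  have hp_pos : ∀ i j, 0 < p i j := fun i j => logistic_pos _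
  have hp_lt : ∀ i j, p i j < 1 := fun i j => logistic_lt_one _
  have hsub01 : 0 < 1 - p 0 1 := by linarith [hp_lt 0 1]
  have hsub10 : 0 < 1 - p 1 0 := by linarith [hp_lt 1 0]
  have hsub00 : 0 < 1 - p 0 0 := by linarith [hp_lt 0 0]
  have hsub11 : 0 < 1 - p 1 1 := by linarith [hp_lt 1 1]
  have hApos : 0 < A := by
    rw [hAdef]
    have h1 := hp_pos 0 0; have h2 := hp_pos 1 1
    positivity
  have hBpos : 0 < B := by
    rw [hBdef]
    have h1 := hp_pos 0 1; have h2 := hp_pos 1 0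
    positivity
  -- apply independence
  have hPA : P {ω | Z ω = 1} = ENNReal.ofReal A := by
    rw [hA, hindep.meas_iInter (fun q => ⟨{v1 q}, measurableSet_singleton _, rfl⟩)]
    rw [Fintype.prod_prod_type]
    simp only [Fin.prod_univ_two]
    have e00 : v1 (0, 0) = 1 := by simp [hv1]
    have e01 : v1 (0, 1) = 0 := by simp [hv1]
    have e10 : v1 (1, 0) = 0 := by simp [hv1]
    have e11 : v1 (1, 1) = 1 := by simp [hv1]
    rw [e00, e01, e10, e11, hP1, hP0, hP0, hP1,
      ← ENNReal.ofReal_mul (logistic_nonneg _), ← ENNReal.ofReal_mul (by positivity),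
      ← ENNReal.ofReal_mul (by
        have := hp_pos 0 0; have := hp_lt 0 1
        positivity)]
  have hPB : P {ω | Z ω = -1} = ENNReal.ofReal B := by
    rw [hB, hindep.meas_iInter (fun q => ⟨{v2 q}, measurableSet_singleton _, rfl⟩)]
    rw [Fintype.prod_prod_type]
    simp only [Fin.prod_univ_two]
    have e00 : v2 (0, 0) = 0 := by simp [hv2]
    have e01 : v2 (0, 1) = 1 := by simp [hv2]
    have e10 : v2 (1, 0) = 1 := by simp [hv2]
    have e11 : v2 (1, 1) = 0 := by simp [hv2]
    rw [e00, e01, e10, e11, hP0, hP1, hP1, hP0,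
      ← ENNReal.ofReal_mul (logistic_nonneg _), ← ENNReal.ofReal_mul (by positivity),
      ← ENNReal.ofReal_mul (by
        have h1 := hp_lt 0 0; have h2 := hp_pos 0 1
        positivity)]
  -- measurability of the sets
  have hmA : MeasurableSet {ω | Z ω = 1} := by
    rw [hA]
    exact MeasurableSet.iInter fun q => (hmeas q.1 q.2) (measurableSet_singleton _)
  have hmB : MeasurableSet {ω | Z ω = -1} := by
    rw [hB]
    exact MeasurableSet.iInter fun q => (hmeas q.1 q.2) (measurableSet_singleton _)
  have hunion : {ω | Z ω = 1 ∨ Z ω = -1} = {ω | Z ω = 1} ∪ {ω | Z ω = -1} := rfl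
  have hdisj : Disjoint {ω | Z ω = 1} {ω | Z ω = -1} := by
    rw [Set.disjoint_left]
    intro ω h1 h2
    simp only [Set.mem_setOf_eq] at h1 h2
    rw [h1] at h2; norm_num at h2
  have hPS : P {ω | Z ω = 1 ∨ Z ω = -1} = ENNReal.ofReal (A + B) := by
    rw [hunion, measure_union hdisj hmB, hPA, hPB, ← ENNReal.ofReal_add hApos.le hBpos.le]
  -- compute the conditional probability
  have hmS : MeasurableSet {ω | Z ω = 1 ∨ Z ω = -1} := by
    rw [hunion]; exact hmA.union hmB
  have hsub : {ω | Z ω = 1} ⊆ {ω | Z ω = 1 ∨ Z ω = -1} := fun ω h => Or.inl h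
  rw [cond_apply hmS, Set.inter_eq_self_of_subset_right hsub, hPS, hPA,
    ← ENNReal.ofReal_inv_of_pos (by linarith), ← ENNReal.ofReal_mul (by positivity)]
  congr 1
  have harg : ⟪r, β⟫ - lam₀ = t 0 0 - t 0 1 - t 1 0 + t 1 1 := by
    rw [hr, hlam₀, ht]
    simp only [inner_sub_left]
    ring
  rw [harg, ← key_ratio (t 0 0) (t 0 1) (t 1 0) (t 1 1)]
  unfold A B
  unfold p
  rw [div_eq_inv_mul]
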